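/- Let G be a finite group in which the centralizer of every nonidentity element is abelian (a CA-group), let u ∈ G, n a positive integer, and g ∈ G with g ≠ 1. If a ∈ G satisfies (a·u⁻¹)ⁿ = aⁿ = g, then a commutes with u and uⁿ = 1. -/

import Mathlib

theorem stmt_8 {G : Type*} [Group G] [Finite G]
    (hCA : ∀ h : G, h ≠ 1 → ∀ x y : G, x * h = h * x → y * h = h * y → x * y = y * x)
    (u g : G) (n : ℕ) (hn : 0 < n) (hg : g ≠ 1) (a : G)
    (h1 : (a * u⁻¹) ^ n = a ^ n) (h2 : a ^ n = g) :
    a * u = u * a ∧ u ^ n = 1 := by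
  have hc1 : a * g = g * a := by rw [← h2]; exact (Commute.self_pow a n)
  have hc2 : (a * u⁻¹) * g = g * (a * u⁻¹) := by
    rw [← h2, ← h1]; exact (Commute.self_pow _ n)
  have key : a * (a * u⁻¹) = (a * u⁻¹) * a := hCA g hg a (a * u⁻¹) hc1 hc2
  have hcomm : Commute a u⁻¹ := by
    have : a * (a * u⁻¹) = a * (u⁻¹ * a) := by rw [key]; group
    exact mul_left_cancel this
  have hau : a * u = u * a := by
    have := hcomm.inv_right
    simpa using this.eq
  have hun : u ^ n = 1 := by
    have := hcomm.mul_pow n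
    rw [h1] at this
    have h3 : (u⁻¹) ^ n = 1 := mul_left_cancel (a := a ^ n) (by rw [mul_one]; exact this.symm)
    simpa [inv_pow, inv_eq_one] using h3
  exact ⟨hau, hun⟩
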